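/- POD optimality in terms of eigenvalues: let C be the empirical covariance operator of snapshots s⁽¹⁾,…,s⁽ᴷ⁾ in a separable Hilbert space X, with orthonormal eigenbasis {ψᵢ} and eigenvalues λ₁ ≥ λ₂ ≥ …. Then for any orthonormal family φ₁,…,φ_r in X, Σ_k ‖s⁽ᵏ⁾ − Σ_{l≤r} ⟨s⁽ᵏ⁾,φ_l⟩ φ_l‖² ≥ Σ_{i>r} λᵢ, with equality when φ_l = ψ_l for l = 1,…,r. -/

import Mathlib

open scoped RealInnerProductSpace

/-- POD optimality. If `C` is the empirical covariance operator of
snapshots in a separable Hilbert space, with Hilbert (orthonormal) eigenbasis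
`ψᵢ` and non-increasing non-negative eigenvalues `λᵢ`, then for any orthonormal
family `φ₁,…,φ_r` the total snapshot projection error is at least the tail
eigenvalue sum `Σ_{i>r} λᵢ`, and equality is attained by the POD basis
`φ_l = ψ_l`. -/
theorem pod_optimality
    {X : Type*} [NormedAddCommGroup X] [InnerProductSpace ℝ X] [CompleteSpace X]
    {K : ℕ} (s : Fin K → X)
    (C : X → X) (hC : ∀ v, C v = ∑ k, ⟪v, s k⟫ • s k)
    (ψ : HilbertBasis ℕ ℝ X) (lam : ℕ → ℝ)
    (heig : ∀ i, C (ψ i) = lam i • ψ i)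
    (hmono : Antitone lam) (hnonneg : ∀ i, 0 ≤ lam i)
    (r : ℕ) :
    (∀ φ : Fin r → X, Orthonormal ℝ φ →
      ∑ k, ‖s k - ∑ l, ⟪s k, φ l⟫ • φ l‖ ^ 2 ≥ ∑' i : ℕ, lam (r + i)) ∧
    (∑ k, ‖s k - ∑ l : Fin r, ⟪s k, ψ (l : ℕ)⟫ • ψ (l : ℕ)‖ ^ 2
      = ∑' i : ℕ, lam (r + i)) := by
  classical
  set Q : X → ℝ := fun v => ∑ k, ⟪v, s k⟫ ^ 2 with hQdef
  -- inner products with C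
  have hCinner : ∀ v w, ⟪C v, w⟫ = ∑ k, ⟪v, s k⟫ * ⟪s k, w⟫ := by
    intro v w
    rw [hC v, sum_inner]
    simp [real_inner_smul_left]
  have hCQ : ∀ v, ⟪C v, v⟫ = Q v := by
    intro v
    rw [hCinner]
    refine Finset.sum_congr rfl fun k _ => ?_
    rw [real_inner_comm (s k) v, sq]
  have hCsym : ∀ v w, ⟪C v, w⟫ = ⟪C w, v⟫ := by
    intro v w
    rw [hCinner, hCinner]
    refine Finset.sum_congr rfl fun k _ => ?_
    rw [real_inner_comm v (s k), real_inner_comm (s k) w]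
    ring
  have hCpsi : ∀ v i, ⟪C v, ψ i⟫ = lam i * ⟪v, ψ i⟫ := by
    intro v i
    rw [hCsym, heig i, real_inner_smul_left, real_inner_comm]
  -- spectral expansion of Q
  have hQspec : ∀ v, HasSum (fun i => lam i * ⟪v, ψ i⟫ ^ 2) (Q v) := by
    intro v
    have h := ψ.hasSum_inner_mul_inner (C v) v
    rw [hCQ v] at h
    convert h using 2 with i
    case e'_3 => rfl
    rw [hCpsi, real_inner_comm (ψ i) v, sq]
    ring
  -- eigenvalues as Q of eigenvectors
  have hlamQ : ∀ i, lam i = Q (ψ i) := by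
    intro i
    have h1 : ⟪C (ψ i), ψ i⟫ = lam i := by
      rw [heig i, real_inner_smul_left, real_inner_self_eq_norm_sq,
        ψ.orthonormal.1 i]
      simp
    rw [← h1, hCQ]
  -- Parseval: total energy
  set T : ℝ := ∑ k, ‖s k‖ ^ 2 with hTdef
  have hlamsum : HasSum lam T := by
    have h : ∀ k : Fin K, HasSum (fun i => ⟪ψ i, s k⟫ ^ 2) (‖s k‖ ^ 2) := by
      intro k
      have := ψ.hasSum_inner_mul_inner (s k) (s k)
      rw [real_inner_self_eq_norm_sq] at this
      convert this using 2 with i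
      case e'_3 => rfl
      rw [real_inner_comm (ψ i) (s k), sq]
    have h2 : HasSum (fun i => ∑ k, ⟪ψ i, s k⟫ ^ 2) T :=
      hasSum_sum fun k _ => h k
    convert h2 using 2 with i
    rw [hlamQ i]
  have hT : ∑' i, lam i = T := hlamsum.tsum_eq
  -- tail formula
  have htail : ∑' i, lam (r + i) = T - ∑ i ∈ Finset.range r, lam i := by
    have := Summable.sum_add_tsum_nat_add r hlamsum.summable
    have he : (∑' i, lam (r + i)) = ∑' i, lam (i + r) := by
      refine tsum_congr fun i => by rw [add_comm]
    rw [he]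
    linarith [this, hT]
  -- error formula for any orthonormal family
  have herr : ∀ φ : Fin r → X, Orthonormal ℝ φ →
      ∑ k, ‖s k - ∑ l, ⟪s k, φ l⟫ • φ l‖ ^ 2 = T - ∑ l, Q (φ l) := by
    intro φ hφ
    have hk : ∀ k, ‖s k - ∑ l, ⟪s k, φ l⟫ • φ l‖ ^ 2
        = ‖s k‖ ^ 2 - ∑ l, ⟪s k, φ l⟫ ^ 2 := by
      intro k
      have h1 : ⟪s k, ∑ l, ⟪s k, φ l⟫ • φ l⟫ = ∑ l, ⟪s k, φ l⟫ ^ 2 := by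
        rw [inner_sum]
        refine Finset.sum_congr rfl fun l _ => ?_
        rw [real_inner_smul_right, sq]
      have h2 : ‖∑ l, ⟪s k, φ l⟫ • φ l‖ ^ 2 = ∑ l, ⟪s k, φ l⟫ ^ 2 := by
        rw [← real_inner_self_eq_norm_sq, hφ.inner_sum]
        refine Finset.sum_congr rfl fun l _ => ?_
        simp [sq]
      rw [norm_sub_sq_real, h1, h2]
      ring
    rw [Finset.sum_congr rfl fun k _ => hk k, Finset.sum_sub_distrib, ← hTdef]
    congr 1
    rw [Finset.sum_comm]
    refine Finset.sum_congr rfl fun l _ => Finset.sum_congr rfl fun k _ => ?_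
    rw [real_inner_comm]
  -- Ky Fan inequality: ∑ l, Q (φ l) ≤ ∑_{i<r} lam i for orthonormal φ
  have hkyfan : ∀ φ : Fin r → X, Orthonormal ℝ φ →
      ∑ l, Q (φ l) ≤ ∑ i ∈ Finset.range r, lam i := by
    intro φ hφ
    set t : ℕ → ℝ := fun i => ∑ l, ⟪φ l, ψ i⟫ ^ 2 with htdef
    have ht0 : ∀ i, 0 ≤ t i := fun i =>
      Finset.sum_nonneg fun l _ => sq_nonneg _
    have ht1 : ∀ i, t i ≤ 1 := by
      intro i
      have := hφ.sum_inner_products_le (ψ i) (s := Finset.univ)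
      rw [ψ.orthonormal.1 i] at this
      simpa [Real.norm_eq_abs, sq_abs] using this
    have htsum : HasSum t (r : ℝ) := by
      have h : ∀ l : Fin r, HasSum (fun i => ⟪φ l, ψ i⟫ ^ 2) 1 := by
        intro l
        have := ψ.hasSum_inner_mul_inner (φ l) (φ l)
        rw [real_inner_self_eq_norm_sq, hφ.1 l] at this
        simp only [one_pow] at this
        convert this using 2 with i
        case e'_3 => rfl
        rw [real_inner_comm (ψ i) (φ l), sq]
      have h2 : HasSum (fun i => ∑ l, ⟪φ l, ψ i⟫ ^ 2) (∑ _l : Fin r, (1 : ℝ)) :=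
        hasSum_sum fun l _ => h l
      simpa using h2
    have hQt : HasSum (fun i => lam i * t i) (∑ l, Q (φ l)) := by
      have h2 : HasSum (fun i => ∑ l, lam i * ⟪φ l, ψ i⟫ ^ 2) (∑ l, Q (φ l)) :=
        hasSum_sum fun l _ => hQspec (φ l)
      convert h2 using 2 with i
      rw [htdef, Finset.mul_sum]
    -- majorization
    set g : ℕ → ℝ := fun i => (lam i - lam r) * t i with hgdef
    set h : ℕ → ℝ := fun i => if i < r then lam i - lam r else 0 with hhdef
    have hgsum : Summable g := by
      have : g = fun i => lam i * t i - lam r * t i := by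
        funext i; rw [hgdef]; ring
      rw [this]
      exact hQt.summable.sub (htsum.summable.mul_left (lam r))
    have hhsum : Summable h := by
      apply summable_of_ne_finset_zero (s := Finset.range r)
      intro i hi
      rw [hhdef]
      simp only [Finset.mem_range] at hi
      simp [hi]
    have hgh : ∀ i, g i ≤ h i := by
      intro i
      by_cases hi : i < r
      · have h1 : lam r ≤ lam i := hmono hi.le
        have := mul_le_mul_of_nonneg_left (ht1 i) (by linarith : 0 ≤ lam i - lam r)
        simp only [hgdef, hhdef, if_pos hi]
        linarith [this]
      · have h1 : lam i ≤ lam r := hmono (not_lt.1 hi)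
        have := mul_nonpos_of_nonpos_of_nonneg (by linarith : lam i - lam r ≤ 0) (ht0 i)
        simp only [hgdef, hhdef, if_neg hi]
        linarith [this]
    have hgle : ∑' i, g i ≤ ∑' i, h i := Summable.tsum_le_tsum hgh hgsum hhsum
    have hhval : ∑' i, h i = ∑ i ∈ Finset.range r, (lam i - lam r) := by
      rw [tsum_eq_sum (s := Finset.range r)]
      · refine Finset.sum_congr rfl fun i hi => ?_
        simp only [Finset.mem_range] at hi
        simp [hhdef, hi]
      · intro i hi
        simp only [Finset.mem_range] at hi
        simp [hhdef, hi]
    have hsplit : ∑ l, Q (φ l) = (∑' i, g i) + lam r * r := by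
      have h1 : HasSum (fun i => g i + lam r * t i) (∑ l, Q (φ l)) := by
        convert hQt using 2 with i
        rw [hgdef]; ring
      have h2 : HasSum (fun i => lam r * t i) (lam r * r) := htsum.mul_left _
      have h3 : HasSum g (∑ l, Q (φ l) - lam r * r) := by
        have := h1.sub h2
        convert this using 2 with i
        case e'_3 => rfl
        ring
      have := h3.tsum_eq
      linarith [this]
    rw [hsplit]
    have hfin : ∑ i ∈ Finset.range r, (lam i - lam r)
        = (∑ i ∈ Finset.range r, lam i) - lam r * r := by
      rw [Finset.sum_sub_distrib, Finset.sum_const, Finset.card_range]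
      ring
    linarith [hgle, hhval ▸ hgle, hfin, hhval]
  constructor
  · intro φ hφ
    rw [herr φ hφ, htail, ge_iff_le]
    have := hkyfan φ hφ
    linarith
  · have hφψ : Orthonormal ℝ (fun l : Fin r => ψ (l : ℕ)) :=
      ψ.orthonormal.comp _ Fin.val_injective
    rw [herr _ hφψ, htail]
    have : ∑ l : Fin r, Q (ψ (l : ℕ)) = ∑ i ∈ Finset.range r, lam i := by
      rw [Finset.sum_range fun i => lam i]
      exact Finset.sum_congr rfl fun l _ => (hlamQ l).symm
    rw [this]
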